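/- Let A be a residuated lattice with reticulation (L, λ), and define μ : CoAnn(A) → CoAnn(L) by μ(F) = λ(F). Then μ is an isomorphism of Boolean algebras. -/

import Mathlib

/-- A (commutative, integral) residuated lattice: a bounded lattice whose top is the
monoid unit `1`, with a commutative monoid operation `*` (⊙) and residuum `himp`
satisfying the law of residuation. -/
class ResiduatedLattice (α : Type*) extends Lattice α, CommMonoid α, OrderBot α where
  himp : α → α → α
  le_one : ∀ a : α, a ≤ 1
  le_himp_iff : ∀ a b c : α, a ≤ himp b c ↔ a * b ≤ c

namespace ResiduatedLattice

variable {α : Type*} [ResiduatedLattice α]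

/-- A filter of a residuated lattice: nonempty, closed under ⊙, upward closed. -/
def IsRLFilter (F : Set α) : Prop :=
  F.Nonempty ∧ (∀ a ∈ F, ∀ b ∈ F, a * b ∈ F) ∧ ∀ a ∈ F, ∀ b : α, a ≤ b → b ∈ F

/-- The principal filter generated by `a`: the smallest filter containing `a`. -/
def princ (a : α) : Set α := ⋂₀ {F : Set α | IsRLFilter F ∧ a ∈ F}

/-- The co-annihilator of a set. -/
def coann (X : Set α) : Set α := {a : α | ∀ x ∈ X, a ⊔ x = 1}

/-- An element is complemented (belongs to the Boolean center). -/
def IsCompl' (a : α) : Prop := ∃ b : α, a ⊔ b = 1 ∧ a ⊓ b = ⊥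

end ResiduatedLattice

open ResiduatedLattice

section Reticulation

variable {α : Type*} [ResiduatedLattice α] {L : Type*} [DistribLattice L] [BoundedOrder L]

/-- Co-annihilator in a bounded (distributive) lattice. -/
def coannL (Y : Set L) : Set L := {x : L | ∀ y ∈ Y, x ⊔ y = ⊤}

/-- Complemented element of the bounded lattice `L`. -/
def IsComplL (f : L) : Prop := ∃ g : L, f ⊔ g = ⊤ ∧ f ⊓ g = ⊥

theorem reticulation_coann_boolean_iso (l : α → L)
    (hsurj : Function.Surjective l)
    (hmul : ∀ a b : α, l (a * b) = l a ⊓ l b)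
    (hsup : ∀ a b : α, l (a ⊔ b) = l a ⊔ l b)
    (hbot : l ⊥ = ⊥) (hone : l 1 = ⊤)
    (hord : ∀ a b : α, l a ≤ l b ↔ ∃ n : ℕ, 0 < n ∧ a ^ n ≤ b) :
    (∀ F : Set α, (∃ X : Set α, F = coann X) → ∃ Y : Set L, l '' F = coannL Y) ∧
    (∀ F G : Set α, (∃ X : Set α, F = coann X) → (∃ X : Set α, G = coann X) →
      l '' F = l '' G → F = G) ∧
    (∀ G : Set L, (∃ Y : Set L, G = coannL Y) →
      ∃ F : Set α, (∃ X : Set α, F = coann X) ∧ l '' F = G) ∧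
    (∀ F G : Set α, (∃ X : Set α, F = coann X) → (∃ X : Set α, G = coann X) →
      l '' (F ∩ G) = l '' F ∩ l '' G) ∧
    (∀ F : Set α, (∃ X : Set α, F = coann X) → l '' coann F = coannL (l '' F)) ∧
    (l '' ({1} : Set α) = ({⊤} : Set L)) ∧
    (l '' (Set.univ : Set α) = (Set.univ : Set L)) := by
  have key : ∀ a x : α, a ⊔ x = 1 ↔ l a ⊔ l x = ⊤ := by
    intro a x
    constructor
    · intro h; rw [← hsup, h, hone]
    · intro h
      have h1 : l 1 ≤ l (a ⊔ x) := by rw [hsup, h, hone]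
      obtain ⟨n, hn, hle⟩ := (hord 1 (a ⊔ x)).mp h1
      simp only [one_pow] at hle
      exact le_antisymm (ResiduatedLattice.le_one _) hle
  have main : ∀ X : Set α, l '' coann X = coannL (l '' X) := by
    intro X
    ext f
    constructor
    · rintro ⟨a, ha, rfl⟩ y ⟨x, hx, rfl⟩
      exact (key a x).mp (ha x hx)
    · intro hf
      obtain ⟨a, rfl⟩ := hsurj f
      exact ⟨a, fun x hx => (key a x).mpr (hf (l x) ⟨x, hx, rfl⟩), rfl⟩
  have mem_iff : ∀ (X : Set α) (a : α), a ∈ coann X ↔ l a ∈ coannL (l '' X) := by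
    intro X a
    constructor
    · rintro ha y ⟨x, hx, rfl⟩; exact (key a x).mp (ha x hx)
    · intro h x hx; exact (key a x).mpr (h (l x) ⟨x, hx, rfl⟩)
  have coannL_union : ∀ Y Y' : Set L, coannL (Y ∪ Y') = coannL Y ∩ coannL Y' := by
    intro Y Y'
    ext f
    constructor
    · intro h
      exact ⟨fun y hy => h y (Or.inl hy), fun y hy => h y (Or.inr hy)⟩
    · rintro ⟨h1, h2⟩ y (hy | hy)
      exacts [h1 y hy, h2 y hy]
  have coann_union : ∀ X X' : Set α, coann (X ∪ X') = coann X ∩ coann X' := by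
    intro X X'
    ext a
    constructor
    · intro h
      exact ⟨fun x hx => h x (Or.inl hx), fun x hx => h x (Or.inr hx)⟩
    · rintro ⟨h1, h2⟩ x (hx | hx)
      exacts [h1 x hx, h2 x hx]
  refine ⟨?_, ?_, ?_, ?_, ?_, ?_, ?_⟩
  · rintro F ⟨X, rfl⟩
    exact ⟨l '' X, main X⟩
  · rintro F G ⟨X, rfl⟩ ⟨X', rfl⟩ h
    ext a
    rw [mem_iff X a, mem_iff X' a, ← main X, ← main X', h]
  · rintro G ⟨Y, rfl⟩
    refine ⟨coann (l ⁻¹' Y), ⟨_, rfl⟩, ?_⟩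
    rw [main, Set.image_preimage_eq Y hsurj]
  · rintro F G ⟨X, rfl⟩ ⟨X', rfl⟩
    rw [← coann_union, main, Set.image_union, coannL_union, ← main, ← main]
  · rintro F ⟨X, rfl⟩
    exact main _
  · rw [Set.image_singleton, hone]
  · rw [Set.image_univ, Set.range_eq_univ.mpr hsurj]


end Reticulation
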